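/- arXiv:2402.18324 — 4 statements merged into one kernel-verified Lean document; each statement's English description precedes it below -/
import Mathlib

section
/- If a topology t on a set X is second countable, then every upper semicontinuous linear (total) preorder on X admits an upper semicontinuous real-valued order preserving (utility) representation. (Rader's theorem: second countable topologies are completely useful.) -/
open scoped Classical

noncomputable def rgsum (P : ℕ → Prop) : ℝ := ∑' j, if P j then (1/2:ℝ)^j else 0

lemma rgsum_summable (P : ℕ → Prop) : Summable fun j => if P j then (1/2:ℝ)^j else 0 := by
  refine Summable.of_nonneg_of_le (fun j => ?_) (fun j => ?_) summable_geometric_two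
  · split <;> positivity
  · split
    · exact le_rfl
    · positivity

lemma partial_le_rgsum (P : ℕ → Prop) (m : ℕ) :
    (∑ j ∈ Finset.range m, if P j then (1/2:ℝ)^j else 0) ≤ rgsum P :=
  Summable.sum_le_tsum _ (fun j _ => by split <;> positivity) (rgsum_summable P)

lemma rgsum_mono {P Q : ℕ → Prop} (h : ∀ j, P j → Q j) : rgsum P ≤ rgsum Q := by
  refine Summable.tsum_le_tsum (fun j => ?_) (rgsum_summable P) (rgsum_summable Q)
  by_cases hj : P j
  · simp [hj, h j hj]
  · simp only [if_neg hj]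
    split <;> positivity

lemma rgsum_lt {P Q : ℕ → Prop} (h : ∀ j, P j → Q j) {j0 : ℕ} (hQ : Q j0) (hP : ¬ P j0) :
    rgsum P < rgsum Q := by
  have hsingle : Summable fun j : ℕ => if j = j0 then (1/2:ℝ)^j0 else 0 :=
    (hasSum_ite_eq j0 ((1/2:ℝ)^j0)).summable
  have hle : rgsum P + (1/2:ℝ)^j0 ≤ rgsum Q := by
    have hpt : ∀ j, (if P j then (1/2:ℝ)^j else 0) + (if j = j0 then (1/2:ℝ)^j0 else 0)
        ≤ (if Q j then (1/2:ℝ)^j else 0) := by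
      intro j
      by_cases hj : j = j0
      · subst hj; simp [hP, hQ]
      · simp only [if_neg hj, add_zero]
        by_cases hPj : P j
        · simp [hPj, h j hPj]
        · simp only [if_neg hPj]
          split <;> positivity
    have := Summable.tsum_le_tsum hpt ((rgsum_summable P).add hsingle) (rgsum_summable Q)
    rwa [Summable.tsum_add (rgsum_summable P) hsingle, tsum_ite_eq] at this
  have : (0:ℝ) < (1/2:ℝ)^j0 := by positivity
  linarith

lemma rgsum_le_partial_add (P : ℕ → Prop) (m : ℕ) :
    rgsum P ≤ (∑ j ∈ Finset.range m, if P j then (1/2:ℝ)^j else 0) + 2 * (1/2:ℝ)^m := by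
  have hsplit := Summable.sum_add_tsum_nat_add (f := fun j => if P j then (1/2:ℝ)^j else 0) m
    (rgsum_summable P)
  have htail : (∑' i : ℕ, if P (i + m) then (1/2:ℝ)^(i+m) else 0) ≤ 2 * (1/2:ℝ)^m := by
    have hpt : ∀ i : ℕ, (if P (i+m) then (1/2:ℝ)^(i+m) else 0) ≤ (1/2:ℝ)^i * (1/2:ℝ)^m := by
      intro i
      rw [← pow_add]
      split
      · exact le_rfl
      · positivity
    calc (∑' i : ℕ, if P (i + m) then (1/2:ℝ)^(i+m) else 0)
        ≤ ∑' i : ℕ, (1/2:ℝ)^i * (1/2:ℝ)^m := by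
          refine Summable.tsum_le_tsum hpt ?_ (summable_geometric_two.mul_right _)
          exact (summable_nat_add_iff m).mpr (rgsum_summable P)
      _ = 2 * (1/2:ℝ)^m := by rw [tsum_mul_right, tsum_geometric_two]
  have : rgsum P = (∑ j ∈ Finset.range m, if P j then (1/2:ℝ)^j else 0)
      + ∑' i : ℕ, if P (i + m) then (1/2:ℝ)^(i+m) else 0 := hsplit.symm
  linarith

/-- Rader's theorem: on a second countable topological space, every upper
semicontinuous linear (total) preorder admits an upper semicontinuous
real-valued order preserving representation. -/
theorem rader_second_countable_completely_useful
    {X : Type*} [TopologicalSpace X] [SecondCountableTopology X]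
    (r : X → X → Prop)
    (hrefl : ∀ x, r x x) (htrans : ∀ x y z, r x y → r y z → r x z)
    (htotal : ∀ x y, r x y ∨ r y x)
    (husc : ∀ x : X, IsOpen {y : X | r y x ∧ ¬ r x y}) :
    ∃ f : X → ℝ, (∀ x y, r x y ↔ f x ≤ f y) ∧ (∀ c : ℝ, IsOpen {z : X | f z < c}) := by
  classical
  by_cases hX : Nonempty X
  swap
  · haveI : IsEmpty X := not_nonempty_iff.mp hX
    refine ⟨fun _ => 0, fun x y => (IsEmpty.false x).elim, fun c => ?_⟩
    rw [Set.eq_empty_of_isEmpty {z : X | (0:ℝ) < c}]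
    exact isOpen_empty
  obtain ⟨x₀⟩ := hX
  set L : X → Set X := fun x => {y | r y x ∧ ¬ r x y} with hLdef
  have hLopen : ∀ x, IsOpen (L x) := husc
  have hLmono : ∀ {x y}, r x y → L x ⊆ L y := by
    intro x y hxy z hz
    exact ⟨htrans _ _ _ hz.1 hxy, fun hyz => hz.2 (htrans _ _ _ hxy hyz)⟩
  have hLirr : ∀ x, x ∉ L x := fun x h => h.2 h.1
  -- countable basis
  have hbasis := TopologicalSpace.isBasis_countableBasis X
  obtain ⟨G0, hG0, -, -⟩ := hbasis.exists_subset_of_mem_open (Set.mem_univ x₀) isOpen_univ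
  obtain ⟨e, he⟩ := (TopologicalSpace.countable_countableBasis X).exists_eq_range ⟨G0, hG0⟩
  -- first utility
  set u : X → ℝ := fun x => rgsum (fun n => e n ⊆ L x) with hudef
  have hu_mono : ∀ {x y}, r x y → u x ≤ u y := by
    intro x y hxy
    exact rgsum_mono (fun n hn => hn.trans (hLmono hxy))
  have hu_lt : ∀ {x y}, r x y → ¬ r y x → u x < u y := by
    intro x y h1 h2
    have hxLy : x ∈ L y := ⟨h1, h2⟩
    obtain ⟨G, hG, hxG, hGL⟩ := hbasis.exists_subset_of_mem_open hxLy (hLopen y)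
    rw [he] at hG
    obtain ⟨n, rfl⟩ := hG
    exact rgsum_lt (fun k hk => hk.trans (hLmono h1)) hGL (fun hsub => hLirr x (hsub hxG))
  have hu_iff : ∀ x y, r x y ↔ u x ≤ u y := by
    intro x y
    constructor
    · exact hu_mono
    · intro h
      by_contra hxy
      exact absurd h (not_le.mpr (hu_lt ((htotal x y).resolve_left hxy) hxy))
  -- countable coinitial family
  have hD : ∃ d : ℕ → X, ∀ x y, r x y → ¬ r y x → ∃ j, r (d j) y ∧ ¬ r (d j) x := by
    have hmin_choice : ∀ n : ℕ, ∃ v : X,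
        (∃ w, e n ⊆ L w ∧ ∀ w', e n ⊆ L w' → r w w') →
          (e n ⊆ L v ∧ ∀ w', e n ⊆ L w' → r v w') := by
      intro n
      by_cases h : ∃ w, e n ⊆ L w ∧ ∀ w', e n ⊆ L w' → r w w'
      · obtain ⟨v, hv⟩ := h
        exact ⟨v, fun _ => hv⟩
      · exact ⟨x₀, fun hh => absurd hh h⟩
    choose dmin hdmin using hmin_choice
    have hrat_choice : ∀ (n : ℕ) (q : ℚ), ∃ v : X,
        (∃ w, e n ⊆ L w ∧ u w < (q:ℝ)) → (e n ⊆ L v ∧ u v < (q:ℝ)) := by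
      intro n q
      by_cases h : ∃ w, e n ⊆ L w ∧ u w < (q:ℝ)
      · obtain ⟨v, hv⟩ := h
        exact ⟨v, fun _ => hv⟩
      · exact ⟨x₀, fun hh => absurd hh h⟩
    choose drat hdrat using hrat_choice
    refine ⟨fun j => if (Nat.unpair j).2 = 0 then dmin (Nat.unpair j).1
      else drat (Nat.unpair j).1 ((Denumerable.eqv ℚ).symm ((Nat.unpair j).2 - 1)), ?_⟩
    intro x y h1 h2
    have hxLy : x ∈ L y := ⟨h1, h2⟩
    obtain ⟨G, hG, hxG, hGL⟩ := hbasis.exists_subset_of_mem_open hxLy (hLopen y)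
    rw [he] at hG
    obtain ⟨n, rfl⟩ := hG
    by_cases hmin : ∃ w, e n ⊆ L w ∧ ∀ w', e n ⊆ L w' → r w w'
    · refine ⟨Nat.pair n 0, ?_⟩
      have hred : (fun j => if (Nat.unpair j).2 = 0 then dmin (Nat.unpair j).1
          else drat (Nat.unpair j).1 ((Denumerable.eqv ℚ).symm ((Nat.unpair j).2 - 1)))
          (Nat.pair n 0) = dmin n := by
        simp [Nat.unpair_pair]
      rw [hred]
      obtain ⟨hvA, hvmin⟩ := hdmin n hmin
      refine ⟨hvmin y hGL, fun hc => hLirr x ?_⟩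
      · exact hLmono hc (hvA hxG)
    · push_neg at hmin
      obtain ⟨w, hwA, hwy⟩ := hmin y hGL
      have hwlt : u w < u y := hu_lt ((htotal w y).resolve_right hwy) hwy
      obtain ⟨q, hq1, hq2⟩ := exists_rat_btwn hwlt
      refine ⟨Nat.pair n ((Denumerable.eqv ℚ) q + 1), ?_⟩
      have hred : (fun j => if (Nat.unpair j).2 = 0 then dmin (Nat.unpair j).1
          else drat (Nat.unpair j).1 ((Denumerable.eqv ℚ).symm ((Nat.unpair j).2 - 1)))
          (Nat.pair n ((Denumerable.eqv ℚ) q + 1)) = drat n q := by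
        simp [Nat.unpair_pair]
      rw [hred]
      obtain ⟨hvA, hvq⟩ := hdrat n q ⟨w, hwA, hq1⟩
      refine ⟨(hu_iff _ _).mpr (le_of_lt (hvq.trans hq2)), fun hc => hLirr x ?_⟩
      exact hLmono hc (hvA hxG)
  obtain ⟨d, hd⟩ := hD
  -- final utility
  refine ⟨fun x => rgsum (fun j => r (d j) x), ?_, ?_⟩
  · intro x y
    constructor
    · intro hxy
      exact rgsum_mono (fun j hj => htrans _ _ _ hj hxy)
    · intro h
      by_contra hxy
      have hyx := (htotal x y).resolve_left hxy
      obtain ⟨j, hjx, hjy⟩ := hd y x hyx hxy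
      exact absurd h (not_le.mpr (rgsum_lt (fun k hk => htrans _ _ _ hk hyx) hjx hjy))
  · intro c
    rw [isOpen_iff_forall_mem_open]
    intro z hz
    simp only [Set.mem_setOf_eq] at hz
    obtain ⟨m, hm⟩ : ∃ m : ℕ, (1/2:ℝ)^m < (c - rgsum (fun j => r (d j) z))/2 :=
      exists_pow_lt_of_lt_one (by linarith) (by norm_num)
    refine ⟨⋂ j ∈ Finset.range m, (if r (d j) z then (Set.univ : Set X) else L (d j)),
      ?_, ?_, ?_⟩
    · intro w hw
      simp only [Set.mem_iInter] at hw
      have hkey : ∀ j < m, r (d j) w → r (d j) z := by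
        intro j hj hrw
        by_contra hrz
        have := hw j (Finset.mem_range.mpr hj)
        rw [if_neg hrz] at this
        exact this.2 hrw
      simp only [Set.mem_setOf_eq]
      calc rgsum (fun j => r (d j) w)
          ≤ (∑ j ∈ Finset.range m, if r (d j) w then (1/2:ℝ)^j else 0) + 2 * (1/2:ℝ)^m :=
            rgsum_le_partial_add _ m
        _ ≤ (∑ j ∈ Finset.range m, if r (d j) z then (1/2:ℝ)^j else 0) + 2 * (1/2:ℝ)^m := by
            refine add_le_add_left (Finset.sum_le_sum fun j hj => ?_) _
            by_cases hrw : r (d j) w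
            · rw [if_pos hrw, if_pos (hkey j (Finset.mem_range.mp hj) hrw)]
            · rw [if_neg hrw]
              split <;> positivity
        _ ≤ rgsum (fun j => r (d j) z) + 2 * (1/2:ℝ)^m :=
            add_le_add_left (partial_le_rgsum _ m) _
        _ < c := by linarith
    · refine isOpen_biInter_finset fun j hj => ?_
      by_cases hrz : r (d j) z
      · rw [if_pos hrz]; exact isOpen_univ
      · rw [if_neg hrz]; exact hLopen _
    · simp only [Set.mem_iInter]
      intro j hj
      by_cases hrz : r (d j) z
      · rw [if_pos hrz]; exact Set.mem_univ _
      · rw [if_neg hrz]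
        exact ⟨(htotal (d j) z).resolve_left hrz, hrz⟩
end

section
/- If a topology t on X is hereditarily separable, then there is no strictly decreasing transfinite chain of open sets indexed by the first uncountable ordinal; that is, there is no function O : ω₁ → t with O(β) ⊊ O(α) whenever α < β. -/
open Cardinal in
/-- In a hereditarily separable space there is no strictly decreasing
ω₁-indexed chain of open sets. -/
theorem hereditarilySeparable_no_decreasing_omega1_chain
    {X : Type*} [TopologicalSpace X]
    (hHS : ∀ A : Set X, ∃ S : Set X, S ⊆ A ∧ S.Countable ∧ A ⊆ closure S) :
    ¬ ∃ O : Ordinal → Set X,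
      (∀ α < (aleph 1).ord, IsOpen (O α)) ∧
      (∀ α β : Ordinal, α < β → β < (aleph 1).ord → O β ⊂ O α) := by
  rintro ⟨O, hopen, hchain⟩
  set Ω := (aleph 1).ord with hΩ
  have hΩlim : Order.IsSuccLimit Ω := Cardinal.isSuccLimit_ord (aleph0_le_aleph 1)
  have hsucc : ∀ α : Ordinal, α < Ω → α + 1 < Ω := fun α h => by rw [Ordinal.add_one_eq_succ]; exact hΩlim.succ_lt h
  have hmono : ∀ α β : Ordinal, α ≤ β → β < Ω → O β ⊆ O α := by
    intro α β hle hβ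
    rcases hle.lt_or_eq with h | h
    · exact (hchain α β h hβ).1
    · rw [h]
  have hx : ∀ α : Ordinal, ∃ y : Option X, ∀ h : α < Ω,
      ∃ z : X, y = some z ∧ z ∈ O α ∧ z ∉ O (α + 1) := by
    intro α
    by_cases h : α < Ω
    · obtain ⟨z, hz1, hz2⟩ := Set.not_subset.mp (hchain α (α + 1) (lt_add_one α) (hsucc α h)).2
      exact ⟨some z, fun _ => ⟨z, rfl, hz1, hz2⟩⟩
    · exact ⟨none, fun h' => absurd h' h⟩
  choose y hy using hx
  -- for α < Ω, extract the point
  have hxex : ∀ α : Ordinal, α < Ω → ∃ z : X, y α = some z ∧ z ∈ O α ∧ z ∉ O (α + 1) := hy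
  choose x hxy hx1 hx2 using hxex
  have hxinj : ∀ (α β : Ordinal) (hα : α < Ω) (hβ : β < Ω),
      x α hα = x β hβ → α = β := by
    intro α β hα hβ hxy'
    by_contra hne
    rcases lt_or_gt_of_ne hne with h | h
    · have : x β hβ ∈ O (α + 1) :=
        hmono (α + 1) β (Order.add_one_le_of_lt h) hβ (hx1 β hβ)
      rw [← hxy'] at this
      exact hx2 α hα this
    · have : x α hα ∈ O (β + 1) :=
        hmono (β + 1) α (Order.add_one_le_of_lt h) hα (hx1 α hα)
      rw [hxy'] at this
      exact hx2 β hβ this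
  set A : Set X := {p | ∃ (α : Ordinal) (h : α < Ω), p = x α h} with hA
  obtain ⟨S, hSA, hScnt, hSd⟩ := hHS A
  -- choose an index for each element of S
  have hidx : ∀ s : S, ∃ (α : Ordinal), ∃ h : α < Ω, (s : X) = x α h := fun s => hSA s.2
  choose g hgΩ hgx using hidx
  -- bound the indices
  have hbound : ∃ γ, γ < Ω ∧ ∀ s : S, g s ≤ γ := by
    rcases isEmpty_or_nonempty S with hS | hS
    · exact ⟨0, hΩlim.pos, fun s => (hS.false s).elim⟩
    · have : Countable S := hScnt.to_subtype
      obtain ⟨f, hf⟩ := exists_surjective_nat S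
      refine ⟨iSup (g ∘ f), ?_, fun s => ?_⟩
      · exact Cardinal.iSup_lt_ord_lift_of_isRegular isRegular_aleph_one
          (by simpa using aleph0_lt_aleph_one) (fun n => hgΩ (f n))
      · obtain ⟨n, rfl⟩ := hf s
        exact Ordinal.le_iSup (g ∘ f) n
  obtain ⟨γ, hγΩ, hγ⟩ := hbound
  have hγ1 : γ + 1 < Ω := hsucc γ hγΩ
  have hmem : x (γ + 1) hγ1 ∈ closure S := hSd ⟨γ + 1, hγ1, rfl⟩
  have hop : IsOpen (O (γ + 1)) := hopen _ hγ1
  obtain ⟨s, hs1, hs2⟩ := (_root_.mem_closure_iff.mp hmem) (O (γ + 1)) hop (hx1 _ hγ1)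
  have hle : g ⟨s, hs2⟩ + 1 ≤ γ + 1 := add_le_add_left (hγ ⟨s, hs2⟩) 1
  have : s ∈ O (g ⟨s, hs2⟩ + 1) := hmono _ _ hle hγ1 hs1
  exact hx2 _ _ (by rw [← hgx ⟨s, hs2⟩]; exact this)
end

section
/- A topology t on X is short if and only if it is both hereditarily Lindelöf and hereditarily separable. -/
open Cardinal Set

namespace ShortProofAux

lemma countable_Iio' {α : Ordinal} (h : α < (aleph 1).ord) : (Set.Iio α).Countable := by
  have h2 : α.card ≤ ℵ₀ := by
    rw [← Order.lt_succ_iff, Cardinal.succ_aleph0]; exact Cardinal.lt_ord.mp h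
  rw [← Set.countable_coe_iff, ← Cardinal.mk_le_aleph0_iff, Ordinal.mk_Iio_ordinal]
  exact Cardinal.lift_le_aleph0.2 h2

lemma succ_lt_omega1 {α : Ordinal} (h : α < (aleph 1).ord) : α + 1 < (aleph 1).ord := by
  rw [Ordinal.add_one_eq_succ]
  exact (Cardinal.isSuccLimit_ord (Cardinal.aleph0_le_aleph 1)).succ_lt h

lemma lt_add_one' (α : Ordinal) : α < α + 1 := by
  rw [Ordinal.add_one_eq_succ]; exact Order.lt_succ α

lemma exists_bound {s : Set Ordinal} (hc : s.Countable)
    (hs : ∀ a ∈ s, a < (aleph 1).ord) :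
    ∃ γ, γ < (aleph 1).ord ∧ ∀ a ∈ s, a < γ := by
  rcases s.eq_empty_or_nonempty with rfl | hne
  · exact ⟨1, Ordinal.one_lt_of_isSuccLimit (Cardinal.isSuccLimit_ord (Cardinal.aleph0_le_aleph 1)), by simp⟩
  obtain ⟨f, hf⟩ := hc.exists_eq_range hne
  refine ⟨iSup (fun n => f n + 1), ?_, ?_⟩
  · refine Cardinal.iSup_lt_ord_lift_of_isRegular Cardinal.isRegular_aleph_one
      (by simpa using Cardinal.aleph0_lt_aleph_one) (fun n => ?_)
    exact succ_lt_omega1 (hs _ (hf ▸ Set.mem_range_self n))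
  · intro a ha
    rw [hf] at ha
    obtain ⟨n, rfl⟩ := ha
    exact lt_of_lt_of_le (lt_add_one' (f n)) (Ordinal.le_iSup (fun n => f n + 1) n)

lemma exists_seq_sep {X : Type*} [TopologicalSpace X] {A : Set X}
    (h : ∀ S : Set X, S ⊆ A → S.Countable → ¬ A ⊆ closure S) :
    ∃ x : Ordinal → X, ∀ α, α < (aleph 1).ord →
      x α ∈ A ∧ x α ∉ closure (x '' Set.Iio α) := by
  classical
  have hA : A.Nonempty := by
    rcases A.eq_empty_or_nonempty with rfl | h'
    · exact absurd (by simp) (h ∅ (by simp) countable_empty)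
    · exact h'
  set d : X := hA.choose with hd
  have key : ∀ (α : Ordinal), α < (aleph 1).ord → ∀ g : Ordinal → X,
      ∃ y, y ∈ A ∧ y ∉ closure ((g '' Set.Iio α) ∩ A) := by
    intro α hα g
    have hS : ((g '' Set.Iio α) ∩ A).Countable :=
      ((countable_Iio' hα).image g).mono inter_subset_left
    have := h _ inter_subset_right hS
    rw [Set.not_subset] at this
    obtain ⟨y, hy1, hy2⟩ := this
    exact ⟨y, hy1, hy2⟩
  set F : ∀ α : Ordinal, (∀ β, β < α → X) → X := fun α ih =>
    if hα : α < (aleph 1).ord then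
      Classical.choose (key α hα (fun β => if hβ : β < α then ih β hβ else d))
    else d with hF
  set x : Ordinal → X := Ordinal.lt_wf.fix F with hx
  have hfix : ∀ α, x α = F α (fun β _ => x β) := fun α => Ordinal.lt_wf.fix_eq F α
  have hspec : ∀ α, α < (aleph 1).ord →
      x α ∈ A ∧ x α ∉ closure (((fun β => if _ : β < α then x β else d) '' Set.Iio α) ∩ A) := by
    intro α hα
    rw [hfix α, hF]
    simp only [dif_pos hα]
    exact Classical.choose_spec (key α hα _)
  refine ⟨x, fun α hα => ?_⟩
  obtain ⟨h1, h2⟩ := hspec α hα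
  refine ⟨h1, ?_⟩
  have himg : ((fun β => if _ : β < α then x β else d) '' Set.Iio α) ∩ A = x '' Set.Iio α := by
    ext y
    constructor
    · rintro ⟨⟨β, hβ, rfl⟩, -⟩
      exact ⟨β, hβ, by simp [dif_pos (Set.mem_Iio.mp hβ)]⟩
    · rintro ⟨β, hβ, rfl⟩
      exact ⟨⟨β, hβ, by simp [dif_pos (Set.mem_Iio.mp hβ)]⟩,
        (hspec β ((Set.mem_Iio.mp hβ).trans hα)).1⟩
  rwa [himg] at h2

lemma exists_seq_lin {X : Type*} [TopologicalSpace X] {A : Set X} {U : Set (Set X)}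
    (hcov : A ⊆ ⋃₀ U)
    (h : ∀ V ⊆ U, V.Countable → ¬ A ⊆ ⋃₀ V) :
    ∃ u : Ordinal → Set X, ∃ y : Ordinal → X, ∀ α, α < (aleph 1).ord →
      u α ∈ U ∧ y α ∈ A ∧ y α ∈ u α ∧ y α ∉ ⋃₀ (u '' Set.Iio α) := by
  classical
  have hA : A.Nonempty := by
    have := h ∅ (by simp) countable_empty
    rw [Set.not_subset] at this
    obtain ⟨y, hy, -⟩ := this
    exact ⟨y, hy⟩
  set d : X × Set X := ⟨hA.choose, ∅⟩ with hd
  have key : ∀ (α : Ordinal), α < (aleph 1).ord → ∀ g : Ordinal → Set X,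
      ∃ p : X × Set X, p.1 ∈ A ∧ p.1 ∉ ⋃₀ ((g '' Set.Iio α) ∩ U) ∧ p.2 ∈ U ∧ p.1 ∈ p.2 := by
    intro α hα g
    have hS : ((g '' Set.Iio α) ∩ U).Countable :=
      ((countable_Iio' hα).image g).mono inter_subset_left
    have h1 := h _ inter_subset_right hS
    rw [Set.not_subset] at h1
    obtain ⟨z, hz1, hz2⟩ := h1
    obtain ⟨t, ht, hzt⟩ := hcov hz1
    exact ⟨⟨z, t⟩, hz1, hz2, ht, hzt⟩
  set F : ∀ α : Ordinal, (∀ β, β < α → X × Set X) → X × Set X := fun α ih =>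
    if hα : α < (aleph 1).ord then
      Classical.choose (key α hα (fun β => if hβ : β < α then (ih β hβ).2 else ∅))
    else d with hF
  set f : Ordinal → X × Set X := Ordinal.lt_wf.fix F with hxdef
  have hfix : ∀ α, f α = F α (fun β _ => f β) := fun α => Ordinal.lt_wf.fix_eq F α
  set u : Ordinal → Set X := fun α => (f α).2 with hu
  set y : Ordinal → X := fun α => (f α).1 with hy
  have hspec : ∀ α, α < (aleph 1).ord →
      y α ∈ A ∧ y α ∉ ⋃₀ (((fun β => if _ : β < α then u β else ∅) '' Set.Iio α) ∩ U) ∧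
        u α ∈ U ∧ y α ∈ u α := by
    intro α hα
    have := Classical.choose_spec (key α hα (fun β => if hβ : β < α then u β else ∅))
    have heq : f α = Classical.choose (key α hα (fun β => if hβ : β < α then u β else ∅)) := by
      rw [hfix α, hF]; simp only [dif_pos hα]
    rw [hy, hu]
    simp only [heq]
    exact this
  refine ⟨u, y, fun α hα => ?_⟩
  obtain ⟨h1, h2, h3, h4⟩ := hspec α hα
  refine ⟨h3, h1, h4, ?_⟩
  have himg : ((fun β => if _ : β < α then u β else ∅) '' Set.Iio α) ∩ U = u '' Set.Iio α := by
    ext s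
    constructor
    · rintro ⟨⟨β, hβ, rfl⟩, -⟩
      exact ⟨β, hβ, by simp [dif_pos (Set.mem_Iio.mp hβ)]⟩
    · rintro ⟨β, hβ, rfl⟩
      exact ⟨⟨β, hβ, by simp [dif_pos (Set.mem_Iio.mp hβ)]⟩,
        (hspec β ((Set.mem_Iio.mp hβ).trans hα)).2.2.1⟩
  rwa [himg] at h2

end ShortProofAux

open ShortProofAux in
open Cardinal in
/-- A topology is short iff it is hereditarily Lindelöf and hereditarily separable. -/
theorem short_iff_hereditarilyLindelof_and_hereditarilySeparable
    {X : Type*} [TopologicalSpace X] :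
    ((¬ ∃ O : Ordinal → Set X,
        (∀ α < (aleph 1).ord, IsOpen (O α)) ∧
        (∀ α β : Ordinal, α < β → β < (aleph 1).ord → O α ⊂ O β)) ∧
     (¬ ∃ O : Ordinal → Set X,
        (∀ α < (aleph 1).ord, IsOpen (O α)) ∧
        (∀ α β : Ordinal, α < β → β < (aleph 1).ord → O β ⊂ O α)))
    ↔
    ((∀ (A : Set X) (U : Set (Set X)), (∀ u ∈ U, IsOpen u) → A ⊆ ⋃₀ U →
        ∃ V ⊆ U, V.Countable ∧ A ⊆ ⋃₀ V) ∧
     (∀ A : Set X, ∃ S : Set X, S ⊆ A ∧ S.Countable ∧ A ⊆ closure S)) := by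
  constructor
  · rintro ⟨hnc1, hnc2⟩
    constructor
    · -- hereditarily Lindelöf
      intro A U hop hcov
      by_contra hno
      push_neg at hno
      obtain ⟨u, y, hspec⟩ := exists_seq_lin hcov hno
      refine hnc1 ⟨fun α => ⋃₀ (u '' Set.Iio α), fun α hα => ?_, fun α β hαβ hβ => ?_⟩
      · refine isOpen_sUnion ?_
        rintro s ⟨γ, hγ, rfl⟩
        exact hop _ (hspec γ ((Set.mem_Iio.mp hγ).trans hα)).1
      · have hα : α < (aleph 1).ord := hαβ.trans hβ
        obtain ⟨h1, h2, h3, h4⟩ := hspec α hα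
        rw [Set.ssubset_def]
        refine ⟨Set.sUnion_subset_sUnion (Set.image_mono (Set.Iio_subset_Iio hαβ.le)), fun hle => ?_⟩
        exact h4 (hle ⟨u α, ⟨α, hαβ, rfl⟩, h3⟩)
    · -- hereditarily separable
      intro A
      by_contra hno
      push_neg at hno
      obtain ⟨x, hspec⟩ := exists_seq_sep hno
      refine hnc2 ⟨fun α => (closure (x '' Set.Iio α))ᶜ, fun α _ => ?_, fun α β hαβ hβ => ?_⟩
      · exact isClosed_closure.isOpen_compl
      · have hα : α < (aleph 1).ord := hαβ.trans hβ
        obtain ⟨h1, h2⟩ := hspec α hα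
        rw [Set.ssubset_def]
        refine ⟨Set.compl_subset_compl.2
          (closure_mono (Set.image_mono (Set.Iio_subset_Iio hαβ.le))), fun hle => ?_⟩
        exact hle h2 (subset_closure ⟨α, hαβ, rfl⟩)
  · rintro ⟨hL, hS⟩
    constructor
    · -- no increasing chain
      rintro ⟨O, hop, hch⟩
      have hmono : ∀ a b : Ordinal, a ≤ b → b < (aleph 1).ord → O a ⊆ O b := by
        intro a b hab hb
        rcases eq_or_lt_of_le hab with rfl | hlt
        · exact subset_rfl
        · exact (hch a b hlt hb).subset
      obtain ⟨V, hVU, hVc, hVcov⟩ := hL (⋃₀ (O '' Set.Iio (aleph 1).ord))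
        (O '' Set.Iio (aleph 1).ord)
        (by rintro s ⟨β, hβ, rfl⟩; exact hop β hβ) subset_rfl
      set s : Set Ordinal := {a | a < (aleph 1).ord ∧ O a ∈ V} with hsdef
      have hscnt : s.Countable := by
        rw [← Set.countable_coe_iff]
        have : Countable V := hVc.to_subtype
        refine Function.Injective.countable (f := fun a : s => (⟨O a, a.2.2⟩ : V)) ?_
        rintro ⟨a, ha⟩ ⟨b, hb⟩ hab
        simp only [Subtype.mk.injEq] at hab ⊢
        by_contra hne
        rcases lt_or_gt_of_ne hne with hlt | hlt
        · exact (hch a b hlt hb.1).ne hab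
        · exact (hch b a hlt ha.1).ne hab.symm
      obtain ⟨γ, hγ, hbd⟩ := exists_bound hscnt (fun a ha => ha.1)
      have hsucc : γ + 1 < (aleph 1).ord := succ_lt_omega1 hγ
      obtain ⟨z, hz1, hz2⟩ := Set.exists_of_ssubset (hch γ (γ + 1) (lt_add_one' γ) hsucc)
      have hzA : z ∈ ⋃₀ (O '' Set.Iio (aleph 1).ord) := ⟨O (γ + 1), ⟨γ + 1, hsucc, rfl⟩, hz1⟩
      obtain ⟨v, hvV, hzv⟩ := hVcov hzA
      obtain ⟨a, ha, rfl⟩ := hVU hvV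
      have has : a ∈ s := ⟨ha, hvV⟩
      exact hz2 (hmono a γ (hbd a has).le hγ hzv)
    · -- no decreasing chain
      rintro ⟨O, hop, hch⟩
      have hmono : ∀ a b : Ordinal, a ≤ b → b < (aleph 1).ord → O b ⊆ O a := by
        intro a b hab hb
        rcases eq_or_lt_of_le hab with rfl | hlt
        · exact subset_rfl
        · exact (hch a b hlt hb).subset
      have h0 : (0 : Ordinal) < (aleph 1).ord :=
        (Cardinal.isSuccLimit_ord (Cardinal.aleph0_le_aleph 1)).pos
      have hd : ∀ α, α < (aleph 1).ord → ∃ z, z ∈ O α ∧ z ∉ O (α + 1) := by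
        intro α hα
        obtain ⟨z, hz1, hz2⟩ :=
          Set.exists_of_ssubset (hch α (α + 1) (lt_add_one' α) (succ_lt_omega1 hα))
        exact ⟨z, hz1, hz2⟩
      classical
      set x : Ordinal → X :=
        fun α => if hα : α < (aleph 1).ord then (hd α hα).choose else (hd 0 h0).choose with hx
      have hx1 : ∀ α (hα : α < (aleph 1).ord), x α ∈ O α := by
        intro α hα
        simp only [hx, dif_pos hα]
        exact (hd α hα).choose_spec.1
      have hx2 : ∀ α (hα : α < (aleph 1).ord), x α ∉ O (α + 1) := by
        intro α hα
        simp only [hx, dif_pos hα]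
        exact (hd α hα).choose_spec.2
      obtain ⟨S, hSA, hSc, hScl⟩ := hS (x '' Set.Iio (aleph 1).ord)
      set s : Set Ordinal := {a | a < (aleph 1).ord ∧ x a ∈ S} with hsdef
      have hxinj : ∀ a b : Ordinal, a < (aleph 1).ord → b < (aleph 1).ord → a < b →
          x a ≠ x b := by
        intro a b ha hb hab heq
        have h1 : x b ∈ O (a + 1) := by
          refine hmono (a + 1) b ?_ hb (hx1 b hb)
          rw [Ordinal.add_one_eq_succ]
          exact Order.succ_le_of_lt hab
        rw [← heq] at h1
        exact hx2 a ha h1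
      have hscnt : s.Countable := by
        rw [← Set.countable_coe_iff]
        have : Countable S := hSc.to_subtype
        refine Function.Injective.countable (f := fun a : s => (⟨x a, a.2.2⟩ : S)) ?_
        rintro ⟨a, ha⟩ ⟨b, hb⟩ hab
        simp only [Subtype.mk.injEq] at hab ⊢
        by_contra hne
        rcases lt_or_gt_of_ne hne with hlt | hlt
        · exact hxinj a b ha.1 hb.1 hlt hab
        · exact hxinj b a hb.1 ha.1 hlt hab.symm
      obtain ⟨γ, hγ, hbd⟩ := exists_bound hscnt (fun a ha => ha.1)
      have hγcl : x γ ∈ closure S := hScl ⟨γ, hγ, rfl⟩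
      obtain ⟨w, hw1, hw2⟩ := mem_closure_iff.mp hγcl (O γ) (hop γ hγ) (hx1 γ hγ)
      obtain ⟨a, ha, rfl⟩ := hSA hw2
      have has : a ∈ s := ⟨ha, hw2⟩
      have h1 : x a ∈ O (a + 1) := by
        refine hmono (a + 1) γ ?_ hγ hw1
        rw [Ordinal.add_one_eq_succ]
        exact Order.succ_le_of_lt (hbd a has)
      exact hx2 a ha h1
end

section
/- Let (A, ≤) be a short chain, i.e., neither ω₁ nor its reverse order embeds into (A, <). Then the upper order topology t_u on A, generated by the sets L(a) := {b ∈ A : b < a} for a ∈ A, is a short topology: neither ω₁ order-embeds into (t_u, ⊊) nor into (t_u, ⊋). -/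
open Cardinal

private lemma lower_of_genOpen {A : Type*} [LinearOrder A] {U : Set A}
    (h : TopologicalSpace.GenerateOpen {S | ∃ a : A, S = Set.Iio a} U) : IsLowerSet U := by
  induction h with
  | basic S hS => obtain ⟨a, rfl⟩ := hS; exact isLowerSet_Iio a
  | univ => exact isLowerSet_univ
  | inter s t _ _ hs ht => exact hs.inter ht
  | sUnion S _ hS => exact isLowerSet_sUnion hS

private lemma aleph1_lift_eq :
    (Ordinal.lift.{v, u} ((aleph 1).ord) : Ordinal.{max u v}) =
      Ordinal.lift.{u, v} ((aleph 1).ord) := by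
  rw [Cardinal.lift_ord, Cardinal.lift_ord, lift_aleph, lift_aleph,
    Ordinal.lift_one, Ordinal.lift_one]

private lemma down_ex {α : Ordinal.{v}} (h : α < (aleph 1).ord) :
    ∃ β : Ordinal.{u}, β < (aleph 1).ord ∧
      Ordinal.lift.{v, u} β = Ordinal.lift.{u, v} α := by
  have h1 : Ordinal.lift.{u, v} α < Ordinal.lift.{v, u} ((aleph 1).ord) := by
    rw [aleph1_lift_eq]
    exact Ordinal.lift_lt.mpr h
  obtain ⟨β, hβ⟩ := Ordinal.mem_range_lift_of_le h1.le
  refine ⟨β, ?_, hβ⟩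
  rw [← Ordinal.lift_lt.{v, u}, hβ]
  exact h1

/-- Transfer an ω₁-chain in `A` between index universes. -/
private lemma transfer {A : Type*} {r : A → A → Prop}
    (h : ∃ w : Ordinal.{u} → A,
        ∀ α β : Ordinal, α < β → β < (aleph 1).ord → r (w α) (w β)) :
    ∃ g : Ordinal.{v} → A,
        ∀ α β : Ordinal, α < β → β < (aleph 1).ord → r (g α) (g β) := by
  classical
  obtain ⟨w, hw⟩ := h
  choose f hf1 hf2 using fun (α : Ordinal.{v}) (hα : α < (aleph 1).ord) =>
    down_ex.{v, u} hα
  refine ⟨fun α => if hα : α < (aleph 1).ord then w (f α hα) else w 0,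
    fun α β hαβ hβ => ?_⟩
  have hα := hαβ.trans hβ
  simp only [dif_pos hα, dif_pos hβ]
  refine hw _ _ ?_ (hf1 β hβ)
  rw [← Ordinal.lift_lt.{v, u}, hf2 α hα, hf2 β hβ]
  exact Ordinal.lift_lt.mpr hαβ

open Cardinal in
/-- The upper order topology of a short chain is a short topology. -/
theorem short_chain_upper_order_topology_short
    {A : Type*} [LinearOrder A]
    (hshort : (¬ ∃ g : Ordinal → A,
                  ∀ α β : Ordinal, α < β → β < (aleph 1).ord → g α < g β) ∧
              (¬ ∃ g : Ordinal → A,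
                  ∀ α β : Ordinal, α < β → β < (aleph 1).ord → g β < g α)) :
    (¬ ∃ O : Ordinal → Set A,
        (∀ α < (aleph 1).ord,
          @IsOpen _ (TopologicalSpace.generateFrom {S | ∃ a : A, S = Set.Iio a}) (O α)) ∧
        (∀ α β : Ordinal, α < β → β < (aleph 1).ord → O α ⊂ O β)) ∧
    (¬ ∃ O : Ordinal → Set A,
        (∀ α < (aleph 1).ord,
          @IsOpen _ (TopologicalSpace.generateFrom {S | ∃ a : A, S = Set.Iio a}) (O α)) ∧
        (∀ α β : Ordinal, α < β → β < (aleph 1).ord → O β ⊂ O α)) := by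
  classical
  obtain ⟨h1, h2⟩ := hshort
  constructor
  · rintro ⟨O, hopen, hmono⟩
    apply h1
    apply transfer
    have hlim := Cardinal.isSuccLimit_ord (Cardinal.aleph0_le_aleph 1)
    have hsucc : ∀ α, α < (aleph 1).ord → α + 1 < (aleph 1).ord := by
      intro α hα
      rw [Ordinal.add_one_eq_succ]
      exact hlim.succ_lt hα
    have hself : ∀ α : Ordinal, α < α + 1 := by
      intro α
      rw [Ordinal.add_one_eq_succ]
      exact Order.lt_succ α
    have hne : ∀ α, α < (aleph 1).ord → (O (α + 1) \ O α).Nonempty := by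
      intro α hα
      obtain ⟨x, hx1, hx2⟩ := Set.exists_of_ssubset (hmono α (α + 1) (hself α) (hsucc α hα))
      exact ⟨x, hx1, hx2⟩
    have hA : Nonempty A := ⟨(hne 0 hlim.pos).some⟩
    refine ⟨fun α => if h : α < (aleph 1).ord then (hne α h).some else Classical.arbitrary A,
      fun α β hαβ hβ => ?_⟩
    have hα : α < (aleph 1).ord := hαβ.trans hβ
    simp only [dif_pos hα, dif_pos hβ]
    have hgα := (hne α hα).some_mem
    have hgβ := (hne β hβ).some_mem
    have hsub : O (α + 1) ⊆ O β := by
      have hle : α + 1 ≤ β := by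
        rw [Ordinal.add_one_eq_succ]; exact Order.succ_le_of_lt hαβ
      rcases lt_or_eq_of_le hle with h | h
      · exact (hmono _ _ h hβ).subset
      · rw [h]
    have hmem : (hne α hα).some ∈ O β := hsub hgα.1
    have hlow : IsLowerSet (O β) := lower_of_genOpen (hopen β hβ)
    by_contra hlt
    exact hgβ.2 (hlow (not_lt.mp hlt) hmem)
  · rintro ⟨O, hopen, hmono⟩
    apply h2
    apply transfer (r := fun a b => b < a)
    have hlim := Cardinal.isSuccLimit_ord (Cardinal.aleph0_le_aleph 1)
    have hsucc : ∀ α, α < (aleph 1).ord → α + 1 < (aleph 1).ord := by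
      intro α hα
      rw [Ordinal.add_one_eq_succ]
      exact hlim.succ_lt hα
    have hself : ∀ α : Ordinal, α < α + 1 := by
      intro α
      rw [Ordinal.add_one_eq_succ]
      exact Order.lt_succ α
    have hne : ∀ α, α < (aleph 1).ord → (O α \ O (α + 1)).Nonempty := by
      intro α hα
      obtain ⟨x, hx1, hx2⟩ := Set.exists_of_ssubset (hmono α (α + 1) (hself α) (hsucc α hα))
      exact ⟨x, hx1, hx2⟩
    have hA : Nonempty A := ⟨(hne 0 hlim.pos).some⟩
    refine ⟨fun α => if h : α < (aleph 1).ord then (hne α h).some else Classical.arbitrary A,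
      fun α β hαβ hβ => ?_⟩
    have hα : α < (aleph 1).ord := hαβ.trans hβ
    simp only [dif_pos hα, dif_pos hβ]
    have hgα := (hne α hα).some_mem
    have hgβ := (hne β hβ).some_mem
    have hsub : O β ⊆ O (α + 1) := by
      have hle : α + 1 ≤ β := by
        rw [Ordinal.add_one_eq_succ]; exact Order.succ_le_of_lt hαβ
      rcases lt_or_eq_of_le hle with h | h
      · exact (hmono _ _ h hβ).subset
      · rw [h]
    have hmem : (hne β hβ).some ∈ O (α + 1) := hsub hgβ.1
    have hlow : IsLowerSet (O (α + 1)) := lower_of_genOpen (hopen (α + 1) (hsucc α hα))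
    by_contra hlt
    exact hgα.2 (hlow (not_lt.mp hlt) hmem)
end
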